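/- Let X be a normed space, P an m-homogeneous continuous polynomial with m ≥ 2 and ‖P‖ > 0, and r_P = ‖P‖^{1/(1-m)}. If ‖y‖ < r_P, then the iterates P^n(y) converge to 0; in fact ‖P^n(y)‖ ≤ (‖y‖/r_P)^{m^n} · r_P. -/

import Mathlib

open Filter

/-- If `‖y‖ < r_P = ‖P‖^(1/(1-m))` then the iterates `P^[n] y` converge to `0`,
and in fact `‖P^[n] y‖ ≤ (‖y‖ / r_P) ^ (m ^ n) * r_P`.  Here `C` plays the role of
`‖P‖ = sup_{‖x‖ ≤ 1} ‖P x‖`. -/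
theorem orbit_in_limit_ball_tendsto_zero {X : Type*} [NormedAddCommGroup X] [NormedSpace ℂ X]
    (P : X → X) (m : ℕ) (hm : 2 ≤ m)
    (hhom : ∀ (c : ℂ) (x : X), P (c • x) = c ^ m • P x)
    (C : ℝ) (hC : 0 < C)
    (hbound : ∀ x : X, ‖P x‖ ≤ C * ‖x‖ ^ m)
    (hsup : ∀ ε > (0 : ℝ), ∃ x : X, ‖x‖ ≤ 1 ∧ C - ε < ‖P x‖)
    (y : X) (hy : ‖y‖ < C ^ ((1 : ℝ) / (1 - (m : ℝ)))) :
    Tendsto (fun n => P^[n] y) atTop (nhds 0) ∧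
      ∀ n : ℕ, ‖P^[n] y‖ ≤
        (‖y‖ / C ^ ((1 : ℝ) / (1 - (m : ℝ)))) ^ (m ^ n) * C ^ ((1 : ℝ) / (1 - (m : ℝ))) := by
  set r : ℝ := C ^ ((1 : ℝ) / (1 - (m : ℝ))) with hr
  have hrpos : 0 < r := Real.rpow_pos_of_pos hC _
  have hq : ‖y‖ / r < 1 := (div_lt_one hrpos).2 hy
  have hq0 : 0 ≤ ‖y‖ / r := div_nonneg (norm_nonneg _) hrpos.le
  have hm2 : (2 : ℝ) ≤ (m : ℝ) := by exact_mod_cast hm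
  have h1m : (1 : ℝ) - (m : ℝ) ≠ 0 := by linarith
  have hCr : C * r ^ m = r := by
    rw [hr, ← Real.rpow_natCast (C ^ ((1 : ℝ) / (1 - (m : ℝ)))) m, ← Real.rpow_mul hC.le]
    nth_rewrite 1 [← Real.rpow_one C]
    rw [← Real.rpow_add hC]
    congr 1
    field_simp
    ring
  have key : ∀ n : ℕ, ‖P^[n] y‖ ≤ (‖y‖ / r) ^ (m ^ n) * r := by
    intro n
    induction n with
    | zero => simp [div_mul_cancel₀ ‖y‖ hrpos.ne']
    | succ n ih =>
      rw [Function.iterate_succ_apply']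
      calc ‖P (P^[n] y)‖ ≤ C * ‖P^[n] y‖ ^ m := hbound _
        _ ≤ C * ((‖y‖ / r) ^ (m ^ n) * r) ^ m := by
            gcongr
        _ = (‖y‖ / r) ^ (m ^ (n + 1)) * (C * r ^ m) := by
            rw [mul_pow, ← pow_mul, pow_succ]
            ring
        _ = (‖y‖ / r) ^ (m ^ (n + 1)) * r := by rw [hCr]
  refine ⟨?_, key⟩
  have h1 : Tendsto (fun n : ℕ => (‖y‖ / r) ^ (m ^ n) * r) atTop (nhds 0) := by
    have h2 := (tendsto_pow_atTop_nhds_zero_of_lt_one hq0 hq).comp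
      (tendsto_pow_atTop_atTop_of_one_lt (by omega : 1 < m))
    simpa using h2.mul_const r
  have := squeeze_zero (fun n => norm_nonneg _) key h1
  exact tendsto_zero_iff_norm_tendsto_zero.mpr this
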